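/- (Cross derivatives, part 2: mixed directional derivatives.) Let d ≥ r + s, b : {α ∈ ℕ³ : |α| = d} → ℝ, λ ∈ ℝ³ with λ₁+λ₂+λ₃ = 1, and δ, η ∈ ℝ³ with δ₁+δ₂+δ₃ = 0 and η₁+η₂+η₃ = 0. Define g : ℝ² → ℝ by g(u,t) = Σ_{|α|=d} b(α) B_α^d(λ + uδ + tη). Then the mixed partial derivative ∂^r_u ∂^s_t g at (0,0) equals Σ_{|α|=d−r−s} (d!/(d−r−s)!) p_α(δ,η) B_α^{d−r−s}(λ), where p_α(δ,η) = Σ_{|β|=s} p_{α+β}(δ) B_β^s(η) and p_μ(δ) = Σ_{|β|=r} b(μ+β) B_β^r(δ). -/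

import Mathlib

open Finset

/-- The trivariate Bernstein polynomial `B_a^d(l) = (d!/(a₁!a₂!a₃!)) l₁^{a₁} l₂^{a₂} l₃^{a₃}`. -/
noncomputable def Bern (d : ℕ) (a : Fin 3 → ℕ) (l : Fin 3 → ℝ) : ℝ :=
  ((Nat.factorial d : ℝ) /
      ((Nat.factorial (a 0) : ℝ) * (Nat.factorial (a 1) : ℝ) * (Nat.factorial (a 2) : ℝ))) *
    (l 0 ^ a 0 * l 1 ^ a 1 * l 2 ^ a 2)

/-- The `k`-th standard basis multi-index `ε_k` of `ℕ³`. -/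
def eps (k : Fin 3) : Fin 3 → ℕ := fun j => if j = k then 1 else 0

/-- The univariate Bernstein polynomial `B_k^n(t) = (n choose k) t^k (1-t)^{n-k}`
(automatically `0` when `k > n`). -/
noncomputable def bern1 (n k : ℕ) (t : ℝ) : ℝ :=
  (Nat.choose n k : ℝ) * t ^ k * (1 - t) ^ (n - k)

section
open Polynomial

lemma iteratedDeriv_polyEval (P : Polynomial ℝ) (n : ℕ) :
    iteratedDeriv n (fun t : ℝ => P.eval t) = fun x => (derivative^[n] P).eval x := by
  induction n generalizing P with
  | zero => simp
  | succ n ih =>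
    rw [iteratedDeriv_succ']
    have : deriv (fun t : ℝ => P.eval t) = fun t => (derivative P).eval t := by
      funext t; exact Polynomial.deriv P
    rw [this, ih, Function.iterate_succ_apply]

lemma mono_deriv (c : ℕ → ℝ) (N n : ℕ) :
    iteratedDeriv n (fun t : ℝ => ∑ k ∈ range N, c k * t ^ k) 0 =
      if n < N then (n.factorial : ℝ) * c n else 0 := by
  have h1 : (fun t : ℝ => ∑ k ∈ range N, c k * t ^ k)
      = fun t => (∑ k ∈ range N, C (c k) * X ^ k : Polynomial ℝ).eval t := by
    funext t; rw [Polynomial.eval_finset_sum]; simp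
  rw [h1, iteratedDeriv_polyEval]
  show ((derivative^[n] (∑ k ∈ range N, C (c k) * X ^ k : Polynomial ℝ))).eval 0
      = if n < N then (n.factorial : ℝ) * c n else 0
  rw [← Polynomial.coeff_zero_eq_eval_zero, Polynomial.coeff_iterate_derivative]
  simp only [zero_add, Nat.descFactorial_self, Polynomial.finset_sum_coeff,
    Polynomial.coeff_C_mul, Polynomial.coeff_X_pow]
  simp only [mul_ite, mul_one, mul_zero]
  rw [Finset.sum_ite_eq (range N) n c]
  by_cases h : n < N
  · simp [h, Finset.mem_range, nsmul_eq_mul]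
  · simp [h, Finset.mem_range]


end

noncomputable def facP (a : Fin 3 → ℕ) : ℝ := ∏ i, ((a i).factorial : ℝ)
noncomputable def powP (v : Fin 3 → ℝ) (a : Fin 3 → ℕ) : ℝ := ∏ i, v i ^ a i

lemma facP_ne (a : Fin 3 → ℕ) : facP a ≠ 0 := by
  unfold facP
  exact Finset.prod_ne_zero_iff.2 fun i _ => Nat.cast_ne_zero.2 (Nat.factorial_ne_zero _)

lemma expand (d : ℕ) (c : (Fin 3 → ℕ) → ℝ) (q w : Fin 3 → ℝ) (t : ℝ) :
    ∑ a ∈ Finset.Nat.antidiagonalTuple 3 d,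
      c a * ((d.factorial : ℝ) / facP a) * ∏ i, (q i + t * w i) ^ a i
    = ∑ n ∈ range (d+1),
        (∑ β ∈ Finset.Nat.antidiagonalTuple 3 n, ∑ α ∈ Finset.Nat.antidiagonalTuple 3 (d-n),
          c (α+β) * ((d.factorial : ℝ) / (facP α * facP β)) * powP q α * powP w β) * t^n := by
  -- expand each power by the binomial theorem, and products of sums into sums over piFinset
  have h1 : ∀ a : Fin 3 → ℕ, (∏ i, (q i + t * w i) ^ a i)
      = ∑ k ∈ Fintype.piFinset (fun i => range (a i + 1)),
          ∏ i, ((t * w i) ^ k i * q i ^ (a i - k i) * ((a i).choose (k i) : ℝ)) := by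
    intro a
    rw [show (∏ i, (q i + t * w i) ^ a i)
        = ∏ i, ∑ k ∈ range (a i + 1), ((t * w i) ^ k * q i ^ (a i - k) * ((a i).choose k : ℝ))
      from Finset.prod_congr rfl fun i _ => by rw [add_comm (q i)]; exact add_pow _ _ _]
    exact Finset.prod_univ_sum _ _
  simp only [h1, Finset.mul_sum]
  rw [Finset.sum_sigma']
  simp only [Finset.sum_mul]
  rw [Finset.sum_sigma', Finset.sum_sigma']
  refine Finset.sum_nbij'
    (fun p => ⟨⟨∑ i, p.2 i, p.2⟩, p.1 - p.2⟩)
    (fun y => ⟨y.2 + y.1.2, y.1.2⟩) ?_ ?_ ?_ ?_ ?_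
  · rintro ⟨a, k⟩ hak
    simp only [Finset.mem_sigma, Finset.Nat.mem_antidiagonalTuple, Fintype.mem_piFinset,
      Finset.mem_range] at hak ⊢
    obtain ⟨ha, hk⟩ := hak
    have hle : ∀ i, k i ≤ a i := fun i => Nat.lt_succ_iff.1 (hk i)
    refine ⟨⟨?_, trivial⟩, ?_⟩
    · have : ∑ i, k i ≤ ∑ i, a i := Finset.sum_le_sum fun i _ => hle i
      omega
    · simp only [Pi.sub_apply]
      rw [Finset.sum_tsub_distrib _ fun i _ => hle i, ha]
  · rintro ⟨⟨n, β⟩, α⟩ h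
    simp only [Finset.mem_sigma, Finset.Nat.mem_antidiagonalTuple,
      Fintype.mem_piFinset, Finset.mem_range] at h ⊢
    obtain ⟨⟨hn, hβ⟩, hα⟩ := h
    constructor
    · simp only [Pi.add_apply]
      rw [Finset.sum_add_distrib, hα, hβ]; omega
    · intro i; simp only [Pi.add_apply]; omega
  · rintro ⟨a, k⟩ hak
    simp only [Finset.mem_sigma, Finset.Nat.mem_antidiagonalTuple, Fintype.mem_piFinset,
      Finset.mem_range] at hak
    have hle : ∀ i, k i ≤ a i := fun i => Nat.lt_succ_iff.1 (hak.2 i)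
    have : a - k + k = a := by funext i; have := hle i; simp only [Pi.add_apply, Pi.sub_apply]; omega
    simp [this]
  · rintro ⟨⟨n, β⟩, α⟩ h
    simp only [Finset.mem_sigma, Finset.Nat.mem_antidiagonalTuple] at h
    obtain ⟨⟨hn, hβ⟩, hα⟩ := h
    have h2 : α + β - β = α := by funext i; simp only [Pi.add_apply, Pi.sub_apply]; omega
    simp [hβ, h2]
  · rintro ⟨a, k⟩ hak
    simp only [Finset.mem_sigma, Finset.Nat.mem_antidiagonalTuple, Fintype.mem_piFinset,
      Finset.mem_range] at hak
    obtain ⟨ha, hk⟩ := hak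
    have hle : ∀ i, k i ≤ a i := fun i => Nat.lt_succ_iff.1 (hk i)
    have hsub : a - k + k = a := by funext i; have := hle i; simp only [Pi.add_apply, Pi.sub_apply]; omega
    show c a * _ * _ = c (a - k + k) * _ * powP q (a - k) * powP w k * t ^ (∑ i, k i)
    rw [hsub]
    have hchoose : ∀ i, ((a i).choose (k i) : ℝ)
        = ((a i).factorial : ℝ) / (((k i).factorial : ℝ) * (((a i - k i)).factorial : ℝ)) :=
      fun i => Nat.cast_choose ℝ (hle i)
    calc c a * ((d.factorial : ℝ) / facP a)
          * ∏ i, ((t * w i) ^ k i * q i ^ (a i - k i) * ((a i).choose (k i) : ℝ))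
        = c a * ((d.factorial : ℝ) / facP a)
          * ((∏ i, (t:ℝ) ^ k i) * (∏ i, w i ^ k i) * (∏ i, q i ^ (a i - k i))
            * ∏ i, ((a i).choose (k i) : ℝ)) := by
          rw [← Finset.prod_mul_distrib, ← Finset.prod_mul_distrib, ← Finset.prod_mul_distrib]
          congr 1
          refine Finset.prod_congr rfl fun i _ => ?_
          ring
      _ = c a * ((d.factorial : ℝ) / (facP (a - k) * facP k)) * powP q (a-k) * powP w k
            * t ^ (∑ i, k i) := by
          rw [Finset.prod_pow_eq_pow_sum]
          have hch : (∏ i, ((a i).choose (k i) : ℝ)) = facP a / (facP k * facP (a-k)) := by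
            rw [Finset.prod_congr rfl fun i _ => hchoose i]
            unfold facP
            rw [Finset.prod_div_distrib, Finset.prod_mul_distrib]
            simp [Pi.sub_apply]
          rw [hch]
          have h1' := facP_ne a; have h2 := facP_ne k; have h3 := facP_ne (a-k)
          unfold powP
          field_simp
          simp only [Pi.sub_apply]

lemma bern_eq (d : ℕ) (a : Fin 3 → ℕ) (v : Fin 3 → ℝ) :
    Bern d a v = ((d.factorial : ℝ) / facP a) * powP v a := by
  unfold Bern facP powP
  rw [Fin.prod_univ_three, Fin.prod_univ_three]

lemma rot {γ : Type*} (A B C : Finset γ) (f : γ → γ → γ → ℝ) :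
    ∑ x ∈ A, ∑ y ∈ B, ∑ z ∈ C, f x y z = ∑ z ∈ C, ∑ x ∈ A, ∑ y ∈ B, f x y z :=
  (Finset.sum_congr rfl fun x _ => Finset.sum_comm).trans Finset.sum_comm


theorem stmt9 (d r s : ℕ) (hrsd : r + s ≤ d) (b : (Fin 3 → ℕ) → ℝ)
    (l δ η : Fin 3 → ℝ) (hl : l 0 + l 1 + l 2 = 1)
    (hδ : δ 0 + δ 1 + δ 2 = 0) (hη : η 0 + η 1 + η 2 = 0) :
    iteratedDeriv r
        (fun u : ℝ => iteratedDeriv s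
          (fun t : ℝ => ∑ a ∈ Finset.Nat.antidiagonalTuple 3 d,
            b a * Bern d a (fun i => l i + u * δ i + t * η i)) 0) 0 =
      ∑ a ∈ Finset.Nat.antidiagonalTuple 3 (d - r - s),
        ((Nat.factorial d : ℝ) / (Nat.factorial (d - r - s) : ℝ)) *
          (∑ β ∈ Finset.Nat.antidiagonalTuple 3 s,
            (∑ β' ∈ Finset.Nat.antidiagonalTuple 3 r, b (a + β + β') * Bern r β' δ) *
              Bern s β η) *
          Bern (d - r - s) a l := by
  have hfac : ∀ n : ℕ, ((n.factorial : ℝ)) ≠ 0 :=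
    fun n => Nat.cast_ne_zero.2 (Nat.factorial_ne_zero n)
  -- the coefficient after both differentiations
  set W : ℕ → ℝ := fun m =>
    ∑ β ∈ Finset.Nat.antidiagonalTuple 3 s, ∑ β' ∈ Finset.Nat.antidiagonalTuple 3 m,
      ∑ α ∈ Finset.Nat.antidiagonalTuple 3 (d - s - m),
        (b (α + β' + β) * ((d.factorial : ℝ) / (((d-s).factorial : ℝ) * facP β)) * powP η β) *
          (((d-s).factorial : ℝ) / (facP α * facP β')) * powP l α * powP δ β' with hW
  -- Step 1: the inner derivative
  have step1 : (fun u : ℝ => iteratedDeriv s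
      (fun t : ℝ => ∑ a ∈ Finset.Nat.antidiagonalTuple 3 d,
        b a * Bern d a (fun i => l i + u * δ i + t * η i)) 0)
      = fun u : ℝ => ∑ m ∈ range (d - s + 1), ((s.factorial : ℝ) * W m) * u ^ m := by
    funext u
    have hA : (fun t : ℝ => ∑ a ∈ Finset.Nat.antidiagonalTuple 3 d,
        b a * Bern d a (fun i => l i + u * δ i + t * η i))
        = fun t : ℝ => ∑ n ∈ range (d+1),
            (∑ β ∈ Finset.Nat.antidiagonalTuple 3 n, ∑ α ∈ Finset.Nat.antidiagonalTuple 3 (d-n),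
              b (α+β) * ((d.factorial : ℝ) / (facP α * facP β)) *
                powP (fun i => l i + u * δ i) α * powP η β) * t^n := by
      funext t
      rw [← expand d b (fun i => l i + u * δ i) η t]
      refine Finset.sum_congr rfl fun a _ => ?_
      rw [bern_eq]
      unfold powP
      ring
    rw [hA, mono_deriv, if_pos (by omega)]
    -- now expand in u
    have hB : (∑ β ∈ Finset.Nat.antidiagonalTuple 3 s,
          ∑ α ∈ Finset.Nat.antidiagonalTuple 3 (d-s),
            b (α+β) * ((d.factorial : ℝ) / (facP α * facP β)) *
              powP (fun i => l i + u * δ i) α * powP η β)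
        = ∑ m ∈ range (d - s + 1), W m * u ^ m := by
      have hper : ∀ β ∈ Finset.Nat.antidiagonalTuple 3 s,
          (∑ α ∈ Finset.Nat.antidiagonalTuple 3 (d-s),
            b (α+β) * ((d.factorial : ℝ) / (facP α * facP β)) *
              powP (fun i => l i + u * δ i) α * powP η β)
          = ∑ m ∈ range (d - s + 1),
              (∑ β' ∈ Finset.Nat.antidiagonalTuple 3 m,
                ∑ α ∈ Finset.Nat.antidiagonalTuple 3 (d-s-m),
                  (b (α + β' + β) * ((d.factorial : ℝ) / (((d-s).factorial : ℝ) * facP β)) *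
                      powP η β) *
                    (((d-s).factorial : ℝ) / (facP α * facP β')) * powP l α * powP δ β') * u^m := by
        intro β _
        rw [← expand (d-s) (fun α => b (α + β) * ((d.factorial : ℝ) /
              (((d-s).factorial : ℝ) * facP β)) * powP η β) l δ u]
        refine Finset.sum_congr rfl fun α _ => ?_
        unfold powP
        have h1 := facP_ne α
        have h2 := hfac (d-s)
        have h3 := facP_ne β
        field_simp
      rw [Finset.sum_congr rfl hper, Finset.sum_comm]
      exact Finset.sum_congr rfl fun m _ => (Finset.sum_mul _ _ _).symm
    rw [hB, Finset.mul_sum]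
    exact Finset.sum_congr rfl fun m _ => by ring
  rw [step1, mono_deriv, if_pos (by omega)]
  -- Step 2: identify with the RHS
  have hds : d - s - r = d - r - s := by omega
  rw [hW]
  simp only [hds]
  rw [rot]
  simp only [Finset.mul_sum, Finset.sum_mul]
  refine Finset.sum_congr rfl fun α hα => ?_
  refine Finset.sum_congr rfl fun β hβ => ?_
  refine Finset.sum_congr rfl fun β' hβ' => ?_
  rw [bern_eq, bern_eq, bern_eq, add_right_comm α β β']
  have h1 := facP_ne α; have h2 := facP_ne β; have h3 := facP_ne β'
  have h4 := hfac (d - s); have h5 := hfac (d - r - s)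
  field_simp
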